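/- Let j ≥ 1 be an integer, h ∈ ℝ[X], and u ∈ ℝ. For v ≠ u let S(v) ∈ ℝ^{j+1} denote the unique tuple (a_1,…,a_{j+1}) such that p = h + Σ_{m=1}^{j+1} a_m X^m satisfies p^{(l)}(u) = 0 for 1 ≤ l ≤ j and p(u) = p(v). Then, as v tends to u within ℝ \ {u}, S(v) converges to the unique tuple (a_1,…,a_{j+1}) ∈ ℝ^{j+1} such that p = h + Σ_{m=1}^{j+1} a_m X^m satisfies p^{(l)}(u) = 0 for every 1 ≤ l ≤ j+1. -/
import Mathlib


open Polynomial Finset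
open Polynomial Finset

namespace Stmt9Aux

noncomputable def q (j : ℕ) (c : Fin (j+1) → ℝ) : ℝ[X] :=
  ∑ m : Fin (j+1), C (c m) * X ^ ((m : ℕ) + 1)

lemma q_coeff (j : ℕ) (c : Fin (j+1) → ℝ) (m : Fin (j+1)) :
    (q j c).coeff ((m:ℕ)+1) = c m := by
  simp only [q, finset_sum_coeff, coeff_C_mul, coeff_X_pow]
  rw [Finset.sum_eq_single m]
  · simp
  · intro b _ hb
    have : ¬ ((m:ℕ) + 1 = (b:ℕ) + 1) := fun heq => hb (Fin.val_injective (by omega))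
    rw [if_neg this, mul_zero]
  · simp

lemma q_coeff_zero (j : ℕ) (c : Fin (j+1) → ℝ) : (q j c).coeff 0 = 0 := by
  simp [q, finset_sum_coeff, coeff_C_mul, coeff_X_pow]

lemma q_natDegree_le (j : ℕ) (c : Fin (j+1) → ℝ) : (q j c).natDegree ≤ j+1 := by
  refine natDegree_sum_le_of_forall_le _ _ fun m _ => ?_
  refine (natDegree_C_mul_le _ _).trans ?_
  simp [natDegree_X_pow]
  omega

lemma deriv_eval_zero_iff (k : ℕ) (p : ℝ[X]) (u : ℝ) :
    (derivative^[k] p).eval u = 0 ↔ (taylor u p).coeff k = 0 := by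
  rw [taylor_coeff]
  have key : (derivative^[k] p).eval u = (k.factorial : ℝ) * (hasseDeriv k p).eval u := by
    rw [← factorial_smul_hasseDeriv]
    simp [nsmul_eq_mul]
  rw [key, mul_eq_zero]
  have : (k.factorial : ℝ) ≠ 0 := Nat.cast_ne_zero.mpr k.factorial_ne_zero
  tauto

noncomputable def T (j : ℕ) (u : ℝ) : (Fin (j+1) → ℝ) →ₗ[ℝ] (Fin (j+1) → ℝ) where
  toFun c l := (taylor u (q j c)).coeff ((l:ℕ)+1)
  map_add' c d := by
    funext l
    simp only [q, Pi.add_apply, map_add, C_add, add_mul, Finset.sum_add_distrib, coeff_add]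
  map_smul' r c := by
    funext l
    simp only [q, Pi.smul_apply, smul_eq_mul, RingHom.id_apply]
    have : (∑ m : Fin (j+1), C (r * c m) * X ^ ((m:ℕ)+1))
        = r • ∑ m : Fin (j+1), C (c m) * X ^ ((m:ℕ)+1) := by
      rw [Finset.smul_sum]
      refine Finset.sum_congr rfl fun m _ => ?_
      rw [smul_eq_C_mul, ← mul_assoc, ← C_mul]
    rw [this, map_smul, coeff_smul, smul_eq_mul]

lemma T_injective (j : ℕ) (u : ℝ) : Function.Injective (T j u) := by
  rw [← LinearMap.ker_eq_bot, LinearMap.ker_eq_bot']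
  intro c hc
  have hcoeff : ∀ k, 1 ≤ k → (taylor u (q j c)).coeff k = 0 := by
    intro k hk
    by_cases hkle : k ≤ j + 1
    · have := congrFun hc ⟨k - 1, by omega⟩
      simpa [T, (by omega : k - 1 + 1 = k)] using this
    · apply coeff_eq_zero_of_natDegree_lt
      rw [natDegree_taylor]
      exact lt_of_le_of_lt (q_natDegree_le j c) (by omega)
  have hqc : q j c = C ((q j c).eval u) := by
    apply taylor_injective u
    ext k
    rcases Nat.eq_zero_or_pos k with rfl | hk
    · rw [taylor_coeff_zero, taylor_C, coeff_C_zero]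
    · rw [hcoeff k hk, taylor_C, coeff_C, if_neg (by omega)]
  funext m
  have h1 := q_coeff j c m
  rw [hqc, coeff_C, if_neg (by omega)] at h1
  simp [← h1]

lemma key (n j : ℕ) (p : ℝ[X]) (hdeg : p.natDegree ≤ n) (u v : ℝ) (hv : v ≠ u)
    (hc : ∀ k, 1 ≤ k → k ≤ j → (taylor u p).coeff k = 0)
    (heval : p.eval u = p.eval v) :
    (taylor u p).coeff (j+1)
      = -∑ k ∈ Icc (j+2) n, (taylor u p).coeff k * (v-u)^(k-(j+1)) := by
  have hdeg' : (taylor u p).natDegree < n + 1 := by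
    rw [natDegree_taylor]; omega
  have hev : p.eval v = ∑ k ∈ Finset.range (n+1), (taylor u p).coeff k * (v-u)^k := by
    rw [← taylor_eval_sub u p v, eval_eq_sum_range' hdeg']
  have hrange : Finset.range (n+1) = insert 0 (Icc 1 n) := by
    ext k; simp [Finset.mem_range, Finset.mem_Icc]; omega
  have h0 : (0:ℝ) = ∑ k ∈ Icc 1 n, (taylor u p).coeff k * (v-u)^k := by
    have := heval
    rw [hev, hrange, Finset.sum_insert (by simp)] at this
    rw [← taylor_coeff_zero u p] at this
    simp only [pow_zero, mul_one] at this
    linarith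
  have hsub : ∑ k ∈ Icc 1 n, (taylor u p).coeff k * (v-u)^k
      = ∑ k ∈ Icc (j+1) n, (taylor u p).coeff k * (v-u)^k := by
    symm
    apply Finset.sum_subset
    · intro k hk; simp only [Finset.mem_Icc] at *; omega
    · intro k hk hnk
      simp only [Finset.mem_Icc] at hk hnk
      rw [hc k hk.1 (by omega), zero_mul]
  have hfac : ∑ k ∈ Icc (j+1) n, (taylor u p).coeff k * (v-u)^k
      = (v-u)^(j+1) * ∑ k ∈ Icc (j+1) n, (taylor u p).coeff k * (v-u)^(k-(j+1)) := by
    rw [Finset.mul_sum]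
    refine Finset.sum_congr rfl fun k hk => ?_
    simp only [Finset.mem_Icc] at hk
    have hp : (v-u)^k = (v-u)^(j+1) * (v-u)^(k-(j+1)) := by
      rw [← pow_add]; congr 1; omega
    rw [hp]; ring
  have hvu : (v - u) ^ (j+1) ≠ 0 := pow_ne_zero _ (sub_ne_zero.mpr hv)
  have hzero : ∑ k ∈ Icc (j+1) n, (taylor u p).coeff k * (v-u)^(k-(j+1)) = 0 := by
    have := h0
    rw [hsub, hfac] at this
    exact (mul_eq_zero.mp this.symm).resolve_left hvu
  by_cases hn : j + 1 ≤ n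
  · rw [show Icc (j+1) n = insert (j+1) (Icc (j+2) n) by
        ext k; simp [Finset.mem_Icc, Finset.mem_insert]; omega,
      Finset.sum_insert (by simp), Nat.sub_self, pow_zero, mul_one] at hzero
    linarith
  · rw [show Icc (j+2) n = (∅ : Finset ℕ) by ext k; simp [Finset.mem_Icc]; omega]
    rw [coeff_eq_zero_of_natDegree_lt (by rw [natDegree_taylor]; omega)]
    simp

end Stmt9Aux

open Stmt9Aux

/-- Let `S(v)`, for `v ≠ u`, be the unique tuple `(a_1,…,a_{j+1})` such that
`p = h + ∑_{m=1}^{j+1} a_m X^m` satisfies `p^{(l)}(u) = 0` for `1 ≤ l ≤ j` and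
`p(u) = p(v)`.  Then as `v → u` within `ℝ \ {u}`, `S(v)` converges to the unique
tuple `a` such that `p = h + ∑_{m=1}^{j+1} a_m X^m` satisfies `p^{(l)}(u) = 0`
for every `1 ≤ l ≤ j+1`. -/
theorem stmt9 (j : ℕ) (hj : 1 ≤ j) (h : Polynomial ℝ) (u : ℝ)
    (S : ℝ → (Fin (j + 1) → ℝ))
    (hS : ∀ v : ℝ, v ≠ u →
      (∀ l : ℕ, 1 ≤ l → l ≤ j →
        (derivative^[l]
          (h + ∑ m : Fin (j + 1), C (S v m) * X ^ ((m : ℕ) + 1))).eval u = 0) ∧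
      (h + ∑ m : Fin (j + 1), C (S v m) * X ^ ((m : ℕ) + 1)).eval u =
        (h + ∑ m : Fin (j + 1), C (S v m) * X ^ ((m : ℕ) + 1)).eval v)
    (a : Fin (j + 1) → ℝ)
    (ha : ∀ l : ℕ, 1 ≤ l → l ≤ j + 1 →
      (derivative^[l] (h + ∑ m : Fin (j + 1), C (a m) * X ^ ((m : ℕ) + 1))).eval u = 0) :
    Filter.Tendsto S (nhdsWithin u {u}ᶜ) (nhds a) := by
  classical
  set n : ℕ := max h.natDegree (j + 1) with hn
  -- the linear equivalence
  have hbij : Function.Bijective (T j u) :=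
    ⟨T_injective j u, LinearMap.injective_iff_surjective.mp (T_injective j u)⟩
  let E : (Fin (j+1) → ℝ) ≃ₗ[ℝ] (Fin (j+1) → ℝ) := LinearEquiv.ofBijective (T j u) hbij
  have hE : ∀ c, E c = T j u c := fun c => rfl
  -- auxiliary continuous data
  let g : ℝ → ℝ := fun v => ∑ k ∈ Finset.Icc (j+2) n, (taylor u h).coeff k * (v-u)^(k-(j+1))
  let b : ℝ → Fin (j+1) → ℝ := fun v l =>
    if (l : ℕ) = j then -(taylor u h).coeff (j+1) - g v else -(taylor u h).coeff ((l:ℕ)+1)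
  have hgu : g u = 0 := by
    refine Finset.sum_eq_zero fun k hk => ?_
    simp only [Finset.mem_Icc] at hk
    rw [sub_self, zero_pow (by omega), mul_zero]
  -- coefficient of taylor of h + q splits
  have hsplit : ∀ (c : Fin (j+1) → ℝ) (k : ℕ),
      (taylor u (h + q j c)).coeff k = (taylor u h).coeff k + (taylor u (q j c)).coeff k := by
    intro c k; rw [map_add, coeff_add]
  have hqhigh : ∀ (c : Fin (j+1) → ℝ) (k : ℕ), j + 2 ≤ k → (taylor u (q j c)).coeff k = 0 := by
    intro c k hk
    apply coeff_eq_zero_of_natDegree_lt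
    rw [natDegree_taylor]
    exact lt_of_le_of_lt (q_natDegree_le j c) (by omega)
  -- T a = b u
  have hTa : T j u a = b u := by
    funext l
    have h1 : (taylor u (h + q j a)).coeff ((l:ℕ)+1) = 0 := by
      rw [← deriv_eval_zero_iff]
      exact ha ((l:ℕ)+1) (by omega) (by omega : (l:ℕ)+1 ≤ j+1)
    have h2 : (T j u a) l = (taylor u (h + q j a)).coeff ((l:ℕ)+1) - (taylor u h).coeff ((l:ℕ)+1) := by
      rw [hsplit]; show (taylor u (q j a)).coeff ((l:ℕ)+1) = _; ring
    rw [h2, h1]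
    by_cases hl : (l:ℕ) = j
    · simp only [b, if_pos hl, hgu, hl, sub_zero]; ring
    · simp only [b, if_neg hl]; ring
  -- for v ≠ u, T (S v) = b v
  have hTS : ∀ v : ℝ, v ≠ u → T j u (S v) = b v := by
    intro v hv
    obtain ⟨hd, he⟩ := hS v hv
    have hcz : ∀ k, 1 ≤ k → k ≤ j → (taylor u (h + q j (S v))).coeff k = 0 := by
      intro k h1 h2
      rw [← deriv_eval_zero_iff]
      exact hd k h1 h2
    funext l
    have h2 : (T j u (S v)) l
        = (taylor u (h + q j (S v))).coeff ((l:ℕ)+1) - (taylor u h).coeff ((l:ℕ)+1) := by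
      rw [hsplit]; show (taylor u (q j (S v))).coeff ((l:ℕ)+1) = _; ring
    by_cases hl : (l:ℕ) = j
    · have hdeg : (h + q j (S v)).natDegree ≤ n := by
        refine (natDegree_add_le _ _).trans ?_
        exact max_le (le_max_left _ _) ((q_natDegree_le j _).trans (le_max_right _ _))
      have hkey := key n j (h + q j (S v)) hdeg u v (fun hvv => hv hvv) hcz he
      have hsum : ∑ k ∈ Finset.Icc (j+2) n, (taylor u (h + q j (S v))).coeff k * (v-u)^(k-(j+1))
          = g v := by
        refine Finset.sum_congr rfl fun k hk => ?_
        simp only [Finset.mem_Icc] at hk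
        rw [hsplit, hqhigh _ k hk.1, add_zero]
      rw [h2, hl, hkey, hsum]
      simp only [b, if_pos hl, hl]
      ring
    · rw [h2, hcz ((l:ℕ)+1) (by omega) (by omega)]
      simp only [b, if_neg hl]
      ring
  -- continuity of b
  have hbcont : Continuous b := by
    refine continuous_pi fun l => ?_
    by_cases hl : (l:ℕ) = j
    · simp only [b, if_pos hl]
      exact continuous_const.sub (continuous_finset_sum _ fun k _ =>
        continuous_const.mul ((continuous_id.sub continuous_const).pow _))
    · simp only [b, if_neg hl]
      exact continuous_const
  -- conclude
  have hcont : Continuous (E.symm : (Fin (j+1) → ℝ) → (Fin (j+1) → ℝ)) :=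
    LinearMap.continuous_of_finiteDimensional (E.symm : (Fin (j+1) → ℝ) →ₗ[ℝ] (Fin (j+1) → ℝ))
  have hlim : Filter.Tendsto (fun v => E.symm (b v)) (nhdsWithin u {u}ᶜ) (nhds a) := by
    have h1 : Filter.Tendsto b (nhdsWithin u {u}ᶜ) (nhds (b u)) :=
      (hbcont.tendsto u).mono_left nhdsWithin_le_nhds
    have h2 : E.symm (b u) = a := by
      rw [← hTa, ← hE, LinearEquiv.symm_apply_apply]
    rw [← h2]
    exact (hcont.tendsto _).comp h1
  refine hlim.congr' ?_
  filter_upwards [self_mem_nhdsWithin] with v hv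
  have hv' : v ≠ u := hv
  rw [← hTS v hv', ← hE, LinearEquiv.symm_apply_apply]
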